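/- Let C be a convex subset of a real vector space, ε > 0, and u : C → ℝ a function such that |u(λp+(1−λ)q) − λu(p) − (1−λ)u(q)| < ε for all p, q ∈ C and all λ ∈ [0,1]. Then for every integer k ≥ 2, all points x₁,…,x_k ∈ C and all weights λ₁,…,λ_k ≥ 0 with Σ_{j=1}^k λ_j = 1, one has |u(Σ_{j=1}^k λ_j x_j) − Σ_{j=1}^k λ_j u(x_j)| < (k−1)·ε. -/
import Mathlib


/-- Lemma `lem:approxCauchy`: a function on a convex set that is
ε-approximately affine on two-point mixtures is `(k-1)·ε`-approximately affine
on `k`-point convex combinations. -/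
theorem stmt_2 {V : Type*} [AddCommGroup V] [Module ℝ V] (C : Set V) (hC : Convex ℝ C)
    (ε : ℝ) (hε : 0 < ε) (u : V → ℝ)
    (h : ∀ p ∈ C, ∀ q ∈ C, ∀ t ∈ Set.Icc (0 : ℝ) 1,
      |u (t • p + (1 - t) • q) - t * u p - (1 - t) * u q| < ε) :
    ∀ k : ℕ, 2 ≤ k → ∀ x : Fin k → V, (∀ j, x j ∈ C) →
      ∀ w : Fin k → ℝ, (∀ j, 0 ≤ w j) → ∑ j, w j = 1 →
      |u (∑ j, w j • x j) - ∑ j, w j * u (x j)| < ((k : ℝ) - 1) * ε := by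
  intro k hk
  induction k, hk using Nat.le_induction with
  | base =>
    intro x hx w hw hsum
    have hsum2 : w 0 + w 1 = 1 := by simpa [Fin.sum_univ_two] using hsum
    have h1 : w 1 = 1 - w 0 := by linarith
    have h0 : w 0 ∈ Set.Icc (0 : ℝ) 1 := ⟨hw 0, by linarith [hw 1]⟩
    have key := h (x 0) (hx 0) (x 1) (hx 1) (w 0) h0
    rw [Fin.sum_univ_two, Fin.sum_univ_two, h1]
    have hc : ((2 : ℕ) : ℝ) - 1 = 1 := by norm_num
    rw [hc, one_mul]
    calc |u (w 0 • x 0 + (1 - w 0) • x 1) - (w 0 * u (x 0) + (1 - w 0) * u (x 1))|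
        = |u (w 0 • x 0 + (1 - w 0) • x 1) - w 0 * u (x 0) - (1 - w 0) * u (x 1)| := by
          congr 1; ring
      _ < ε := key
  | succ k hk ih =>
    intro x hx w hw hsum
    set t : ℝ := ∑ j : Fin k, w j.castSucc with ht
    have hsplit : t + w (Fin.last k) = 1 := by
      rw [ht, ← Fin.sum_univ_castSucc]; exact hsum
    have ht0 : 0 ≤ t := Finset.sum_nonneg fun j _ => hw _
    have hk2 : (2 : ℝ) ≤ (k : ℝ) := by exact_mod_cast hk
    have hcast : ((k + 1 : ℕ) : ℝ) - 1 = (k : ℝ) := by push_cast; ring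
    rcases eq_or_lt_of_le ht0 with h0 | hpos
    · -- all weights except the last vanish
      have hz : ∀ j : Fin k, w j.castSucc = 0 := by
        intro j
        exact (Finset.sum_eq_zero_iff_of_nonneg (fun j _ => hw (Fin.castSucc j))).mp
          h0.symm j (Finset.mem_univ j)
      have hwl : w (Fin.last k) = 1 := by
        have : t = 0 := h0.symm
        linarith
      have hx1 : ∑ j, w j • x j = x (Fin.last k) := by
        rw [Fin.sum_univ_castSucc]
        simp [hz, hwl]
      have hx2 : ∑ j, w j * u (x j) = u (x (Fin.last k)) := by
        rw [Fin.sum_univ_castSucc]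
        simp [hz, hwl]
      rw [hx1, hx2, hcast]
      simp only [sub_self, abs_zero]
      positivity
    · set v : Fin k → ℝ := fun j => w j.castSucc / t with hv
      have hvnn : ∀ j, 0 ≤ v j := fun j => div_nonneg (hw _) ht0
      have hvsum : ∑ j, v j = 1 := by
        rw [hv]
        simp only
        rw [← Finset.sum_div, ← ht]
        field_simp
      set y : V := ∑ j, v j • x j.castSucc with hy
      have hyC : y ∈ C := hC.sum_mem (fun j _ => hvnn j) hvsum (fun j _ => hx _)
      have ht1 : t ≤ 1 := by linarith [hw (Fin.last k)]
      have hty : t • y = ∑ j : Fin k, w j.castSucc • x j.castSucc := by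
        rw [hy, Finset.smul_sum]
        refine Finset.sum_congr rfl fun j _ => ?_
        rw [smul_smul, hv]
        congr 1
        field_simp
      have htotal : ∑ j, w j • x j = t • y + (1 - t) • x (Fin.last k) := by
        rw [Fin.sum_univ_castSucc, hty]
        congr 2
        linarith
      have key := h y hyC (x (Fin.last k)) (hx _) t ⟨ht0, ht1⟩
      have ihy := ih (fun j => x j.castSucc) (fun j => hx _) v hvnn hvsum
      set S : ℝ := ∑ j : Fin k, v j * u (x j.castSucc) with hS
      have hsum2 : ∑ j : Fin (k + 1), w j * u (x j)
          = t * S + (1 - t) * u (x (Fin.last k)) := by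
        rw [Fin.sum_univ_castSucc, hS, Finset.mul_sum]
        congr 1
        · refine Finset.sum_congr rfl fun j _ => ?_
          rw [hv]
          field_simp
        · congr 1
          linarith
      rw [htotal, hsum2, hcast]
      have habs : t * |u y - S| < t * (((k : ℝ) - 1) * ε) :=
        mul_lt_mul_of_pos_left ihy hpos
      have hmul : t * (((k : ℝ) - 1) * ε) ≤ ((k : ℝ) - 1) * ε := by
        have hX : 0 ≤ ((k : ℝ) - 1) * ε := by nlinarith
        nlinarith [mul_nonneg (sub_nonneg.mpr ht1) hX]
      calc |u (t • y + (1 - t) • x (Fin.last k)) - (t * S + (1 - t) * u (x (Fin.last k)))|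
          = |(u (t • y + (1 - t) • x (Fin.last k)) - t * u y - (1 - t) * u (x (Fin.last k)))
              + t * (u y - S)| := by congr 1; ring
        _ ≤ |u (t • y + (1 - t) • x (Fin.last k)) - t * u y - (1 - t) * u (x (Fin.last k))|
              + |t * (u y - S)| := abs_add_le _ _
        _ = |u (t • y + (1 - t) • x (Fin.last k)) - t * u y - (1 - t) * u (x (Fin.last k))|
              + t * |u y - S| := by rw [abs_mul, abs_of_nonneg ht0]
        _ < ε + (((k : ℝ) - 1) * ε) := by
            have := lt_of_lt_of_le habs hmul
            linarith [key]
        _ = (k : ℝ) * ε := by ring
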